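/- For all H > 0, λ > 0 and t > 0, the function t^H K_H(λt) satisfies the lower bound t^H K_H(λt) ≥ (2^(H-1) e^(-λt/2) / λ^H) Γ(H, λt/2), where Γ(H, x) = ∫_x^∞ s^(H-1) e^(-s) ds is the upper incomplete Gamma function. -/

import Mathlib

open MeasureTheory Set Real

noncomputable def besselK (ν x : ℝ) : ℝ :=
  (1/2) * ∫ z in Set.Ioi (0:ℝ), z ^ (ν - 1) * Real.exp (-(x/2) * (z + 1/z))

noncomputable def upperGamma (H x : ℝ) : ℝ :=
  ∫ s in Set.Ioi x, s ^ (H - 1) * Real.exp (-s)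

lemma gamma_int (H c : ℝ) (hH : 0 < H) (hc : 0 < c) :
    IntegrableOn (fun s : ℝ => s ^ (H - 1) * Real.exp (-s)) (Set.Ioi c) := by
  have := (Real.GammaIntegral_convergent hH).mono_set (Set.Ioi_subset_Ioi hc.le)
  exact this.congr_fun (fun x _ => mul_comm _ _) measurableSet_Ioi

lemma scaled_int (H c : ℝ) (hH : 0 < H) (hc : 0 < c) :
    IntegrableOn (fun z : ℝ => z ^ (H - 1) * Real.exp (-(c * z))) (Set.Ioi 1) := by
  have h1 : IntegrableOn (fun z : ℝ => (c * z) ^ (H - 1) * Real.exp (-(c * z)))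
      (Set.Ioi 1) := by
    refine (integrableOn_Ioi_comp_mul_left_iff
      (fun s : ℝ => s ^ (H - 1) * Real.exp (-s)) 1 hc).mpr ?_
    rw [mul_one]
    exact gamma_int H c hH hc
  have h2 : IntegrableOn (fun z : ℝ => c ^ (1 - H) * ((c * z) ^ (H - 1) * Real.exp (-(c * z)))) (Set.Ioi 1) := h1.const_mul (c ^ (1 - H))
  refine h2.congr_fun (fun z hz => ?_) measurableSet_Ioi
  have hz0 : (0:ℝ) < z := lt_trans one_pos hz
  dsimp only
  rw [Real.mul_rpow hc.le hz0.le]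
  rw [show c ^ (1 - H) * (c ^ (H - 1) * z ^ (H - 1) * Real.exp (-(c * z)))
      = (c ^ (1 - H) * c ^ (H - 1)) * (z ^ (H - 1) * Real.exp (-(c * z))) by ring]
  rw [← Real.rpow_add hc]
  norm_num

theorem stmt_1 (H lam t : ℝ) (hH : 0 < H) (hlam : 0 < lam) (ht : 0 < t) :
    2 ^ (H - 1) * Real.exp (-(lam * t) / 2) / lam ^ H * upperGamma H (lam * t / 2)
      ≤ t ^ H * besselK H (lam * t) := by
  set c : ℝ := lam * t / 2 with hc_def
  have hc : 0 < c := by positivity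
  set f : ℝ → ℝ := fun z => z ^ (H - 1) * Real.exp (-c * (z + 1/z)) with hf_def
  have hfmeas : Measurable f := by
    rw [hf_def]; fun_prop
  -- f nonneg
  have hfnn : ∀ z : ℝ, 0 < z → 0 ≤ f z := fun z hz => by positivity
  -- integrability of f on Ioi 0
  have hint1 : IntegrableOn f (Set.Ioc 0 1) := by
    have hbound : IntegrableOn (fun z : ℝ => c⁻¹ * z ^ H) (Set.Ioc 0 1) := by
      refine Integrable.const_mul ?_ _
      have : IntervalIntegrable (fun x : ℝ => x ^ H) volume 0 1 :=
        intervalIntegral.intervalIntegrable_rpow' (by linarith)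
      exact (intervalIntegrable_iff_integrableOn_Ioc_of_le zero_le_one).mp this
    refine Integrable.mono' hbound (hfmeas.aestronglyMeasurable.restrict) ?_
    refine (ae_restrict_iff' measurableSet_Ioc).mpr (ae_of_all _ fun z hz => ?_)
    have hz0 : (0:ℝ) < z := hz.1
    rw [Real.norm_of_nonneg (hfnn z hz0)]
    have h1 : Real.exp (-c * (z + 1/z)) ≤ Real.exp (-(c/z)) := by
      apply Real.exp_le_exp.mpr
      rw [neg_mul, neg_le_neg_iff, div_eq_mul_inv, one_div]
      nlinarith [mul_pos hc hz0]
    have h2 : Real.exp (-(c/z)) ≤ z / c := by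
      rw [Real.exp_neg]
      rw [inv_le_comm₀ (Real.exp_pos _) (by positivity)]
      calc (z/c)⁻¹ = c/z := by rw [inv_div]
        _ ≤ Real.exp (c/z) := by
            have := Real.add_one_le_exp (c/z); linarith
    calc f z ≤ z ^ (H - 1) * (z / c) := by
          exact mul_le_mul_of_nonneg_left (h1.trans h2) (by positivity)
      _ = c⁻¹ * z ^ H := by
          rw [show z ^ H = z ^ (H - 1 + 1) by ring_nf, Real.rpow_add hz0,
            Real.rpow_one]
          field_simp
  have hint2 : IntegrableOn f (Set.Ioi 1) := by
    refine Integrable.mono' (scaled_int H c hH hc)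
      (hfmeas.aestronglyMeasurable.restrict) ?_
    refine (ae_restrict_iff' measurableSet_Ioi).mpr (ae_of_all _ fun z hz => ?_)
    have hz0 : (0:ℝ) < z := lt_trans one_pos hz
    rw [Real.norm_of_nonneg (hfnn z hz0)]
    refine mul_le_mul_of_nonneg_left ?_ (by positivity)
    apply Real.exp_le_exp.mpr
    have : 0 < c / z := by positivity
    rw [neg_mul]
    nlinarith [mul_pos hc (by positivity : (0:ℝ) < 1/z)]
  have hfint : IntegrableOn f (Set.Ioi 0) := by
    rw [← Set.Ioc_union_Ioi_eq_Ioi (zero_le_one)]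
    exact hint1.union hint2
  -- step 1 : integral over Ioi 0 ≥ integral over Ioi 1
  have step1 : (∫ z in Set.Ioi (1:ℝ), f z) ≤ ∫ z in Set.Ioi (0:ℝ), f z := by
    refine setIntegral_mono_set hfint ?_ ?_
    · refine (ae_restrict_iff' measurableSet_Ioi).mpr (ae_of_all _ fun z hz => hfnn z hz)
    · exact HasSubset.Subset.eventuallyLE (Set.Ioi_subset_Ioi zero_le_one)
  -- step 2 : pointwise lower bound on Ioi 1
  have step2 : (∫ z in Set.Ioi (1:ℝ), Real.exp (-c) * (z ^ (H - 1) * Real.exp (-(c * z))))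
      ≤ ∫ z in Set.Ioi (1:ℝ), f z := by
    refine setIntegral_mono_on ((scaled_int H c hH hc).const_mul _) hint2
      measurableSet_Ioi fun z hz => ?_
    have hz0 : (0:ℝ) < z := lt_trans one_pos hz
    rw [show Real.exp (-c) * (z ^ (H - 1) * Real.exp (-(c * z)))
        = z ^ (H - 1) * (Real.exp (-c) * Real.exp (-(c * z))) by ring, ← Real.exp_add]
    refine mul_le_mul_of_nonneg_left (Real.exp_le_exp.mpr ?_) (by positivity)
    have h1z : 1/z ≤ 1 := by
      rw [div_le_one hz0]; exact le_of_lt hz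
    nlinarith
  -- step 3 : evaluate ∫ z in Ioi 1, z^(H-1) exp(-cz)
  have step3 : (∫ z in Set.Ioi (1:ℝ), z ^ (H - 1) * Real.exp (-(c * z)))
      = c ^ (-H) * upperGamma H c := by
    have key : ∀ z ∈ Set.Ioi (1:ℝ), z ^ (H - 1) * Real.exp (-(c * z))
        = c ^ (1 - H) * ((c * z) ^ (H - 1) * Real.exp (-(c * z))) := by
      intro z hz
      have hz0 : (0:ℝ) < z := lt_trans one_pos hz
      rw [Real.mul_rpow hc.le hz0.le]
      rw [show c ^ (1 - H) * (c ^ (H - 1) * z ^ (H - 1) * Real.exp (-(c * z)))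
          = (c ^ (1 - H) * c ^ (H - 1)) * (z ^ (H - 1) * Real.exp (-(c * z))) by ring,
        ← Real.rpow_add hc]
      norm_num
    rw [setIntegral_congr_fun measurableSet_Ioi key, integral_const_mul]
    rw [integral_comp_mul_left_Ioi (fun s : ℝ => s ^ (H - 1) * Real.exp (-s)) 1 hc, mul_one]
    rw [smul_eq_mul, ← mul_assoc, upperGamma]
    congr 1
    rw [← Real.rpow_neg_one c, ← Real.rpow_add hc]
    congr 1; ring
  -- combine: besselK bound
  have hbk : (1/2) * (Real.exp (-c) * (c ^ (-H) * upperGamma H c)) ≤ besselK H (lam * t) := by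
    rw [besselK]
    have hxc : (lam * t) / 2 = c := rfl
    rw [hxc]
    have := step2.trans step1
    rw [integral_const_mul, step3] at this
    linarith
  have htH : (0:ℝ) < t ^ H := Real.rpow_pos_of_pos ht H
  have := mul_le_mul_of_nonneg_left hbk htH.le
  refine le_trans (le_of_eq ?_) this
  -- algebra: t^H * (1/2 * (exp(-c) * (c^(-H) * Γ))) = 2^(H-1) * exp(-(lam t)/2)/lam^H * Γ
  have hcH : c ^ (-H) = 2 ^ H / (lam ^ H * t ^ H) := by
    rw [hc_def, Real.rpow_neg (by positivity), Real.div_rpow (by positivity) (by norm_num),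
      Real.mul_rpow hlam.le ht.le]
    rw [inv_div]
  have h2H : (2:ℝ) ^ (H - 1) = 2 ^ H / 2 := by
    rw [Real.rpow_sub two_pos, Real.rpow_one]
  have hexp : -(lam * t) / 2 = -c := by rw [hc_def]; ring
  rw [hexp, hcH, h2H]
  have hl : (0:ℝ) < lam ^ H := Real.rpow_pos_of_pos hlam H
  have h2 : (0:ℝ) < (2:ℝ) ^ H := Real.rpow_pos_of_pos two_pos H
  field_simp
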